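/- Let R be the right-rotation relation on full binary trees: t R t′ if t′ is obtained from t by replacing some subtree of the form (w₁ * w₂) * w₃ by w₁ * (w₂ * w₃), and let ≼ be the reflexive-transitive closure of R. Then ≼ is antisymmetric: if t ≼ t′ and t′ ≼ t then t = t′. Hence ≼ is a partial order on full binary trees (and on the set Br_n of full binary trees with n leaves, for each n). -/
import Mathlib


/-- Full binary trees: a leaf, or a node with two full binary subtrees. -/
inductive FullBinTree : Type
  | leaf : FullBinTree
  | node : FullBinTree → FullBinTree → FullBinTree

namespace FullBinTree

/-- One right rotation: replace some subtree `(w₁ * w₂) * w₃` by `w₁ * (w₂ * w₃)`. -/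
inductive Rot : FullBinTree → FullBinTree → Prop
  | rot (w₁ w₂ w₃ : FullBinTree) : Rot (node (node w₁ w₂) w₃) (node w₁ (node w₂ w₃))
  | left {u u' : FullBinTree} (v : FullBinTree) : Rot u u' → Rot (node u v) (node u' v)
  | right (u : FullBinTree) {v v' : FullBinTree} : Rot v v' → Rot (node u v) (node u v')

def sz : FullBinTree → Nat
  | leaf => 1
  | node u v => sz u + sz v

def m : FullBinTree → Nat
  | leaf => 0
  | node u v => m u + m v + sz v

theorem sz_rot {t t' : FullBinTree} (h : Rot t t') : sz t = sz t' := by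
  induction h with
  | rot w₁ w₂ w₃ => simp [sz]; omega
  | left v _ ih => simp [sz, ih]
  | right u _ ih => simp [sz, ih]

theorem m_rot {t t' : FullBinTree} (h : Rot t t') : m t < m t' := by
  induction h with
  | rot w₁ w₂ w₃ =>
    have h1 : 0 < sz w₃ := by induction w₃ <;> simp [sz] <;> omega
    simp [m, sz]; omega
  | left v _ ih => simp [m]; omega
  | right u h ih => have := sz_rot h; simp [m]; omega

theorem m_le {t t' : FullBinTree} (h : Relation.ReflTransGen Rot t t') : m t ≤ m t' := by
  induction h with
  | refl => exact le_refl _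
  | tail _ hr ih => exact ih.trans (m_rot hr).le

end FullBinTree

open FullBinTree in
/-- The reflexive-transitive closure of right rotation (the Tamari order) is
antisymmetric, hence a partial order on full binary trees. -/
theorem tamari_antisymm (t t' : FullBinTree)
    (h : Relation.ReflTransGen Rot t t') (h' : Relation.ReflTransGen Rot t' t) :
    t = t' := by
  rcases h.cases_head with rfl | ⟨c, hc, hct⟩
  · rfl
  · exact absurd (le_trans (m_le hct) (m_le h')) (not_le.mpr (m_rot hc))
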